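/- arXiv:0710.5317 — 4 statements merged into one kernel-verified Lean document; each statement's English description precedes it below -/
import Mathlib

section
/- Let U ⊆ ℂ be open and let G : U → ℂ^m be holomorphic with ⟨⟨G(z),G(z)⟩⟩ ≠ 0 for all z ∈ U and with isotropic derivative, i.e. ⟨⟨G'(z),G'(z)⟩⟩ = 0 for all z ∈ U. Then the holomorphic map T∘G also has isotropic derivative: ⟨⟨(T∘G)'(z), (T∘G)'(z)⟩⟩ = 0 for all z ∈ U. -/
open scoped BigOperators

/-- The ℂ-bilinear form `⟨⟨Z,W⟩⟩ = ∑ j, Z j * W j` on `ℂ^m` (no conjugation). -/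
noncomputable def bilin {m : ℕ} (Z W : Fin m → ℂ) : ℂ := ∑ j, Z j * W j

/-- The holomorphic inversion `T(Z) = Z / ⟨⟨Z,Z⟩⟩`. -/
noncomputable def Tmap {m : ℕ} (Z : Fin m → ℂ) : Fin m → ℂ := (bilin Z Z)⁻¹ • Z

/-- If `G : U → ℂ^m` is holomorphic with `⟨⟨G,G⟩⟩ ≠ 0` on `U` and with isotropic derivative
(`⟨⟨G',G'⟩⟩ = 0` on `U`), then the holomorphic map `T ∘ G` also has isotropic derivative. -/
theorem Tmap_comp_isotropic_deriv (m : ℕ) (U : Set ℂ) (hU : IsOpen U)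
    (G : ℂ → Fin m → ℂ)
    (hG : ∀ z ∈ U, DifferentiableAt ℂ G z)
    (hne : ∀ z ∈ U, bilin (G z) (G z) ≠ 0)
    (hiso : ∀ z ∈ U, bilin (deriv G z) (deriv G z) = 0) :
    ∀ z ∈ U,
      bilin (deriv (fun w => Tmap (G w)) z) (deriv (fun w => Tmap (G w)) z) = 0 := by
  intro z hz
  have hd : HasDerivAt G (deriv G z) z := (hG z hz).hasDerivAt
  set g := deriv G z with hg
  have hcomp : ∀ j, HasDerivAt (fun w => G w j) (g j) z := by
    intro j
    have := (ContinuousLinearMap.proj (R := ℂ) (φ := fun _ : Fin m => ℂ)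
      j).hasFDerivAt.comp_hasDerivAt z hd
    exact this
  set q := bilin (G z) (G z) with hq
  set S := ∑ j, G z j * g j with hS
  have hQ : HasDerivAt (fun w => bilin (G w) (G w)) (2 * S) z := by
    have h1 : HasDerivAt (fun w => ∑ j, G w j * G w j)
        (∑ j, (g j * G z j + G z j * g j)) z :=
      HasDerivAt.fun_sum (fun j _ => (hcomp j).mul (hcomp j))
    have h2 : (∑ j, (g j * G z j + G z j * g j)) = 2 * S := by
      rw [hS, Finset.mul_sum]
      exact Finset.sum_congr rfl (fun j _ => by ring)
    simpa [bilin, h2] using h1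
  have hqne : q ≠ 0 := hne z hz
  have hinv : HasDerivAt (fun w => (bilin (G w) (G w))⁻¹) (-(2 * S) / q ^ 2) z :=
    hQ.inv hqne
  set D : Fin m → ℂ := fun j => -(2 * S) / q ^ 2 * G z j + q⁻¹ * g j with hD
  have hT : HasDerivAt (fun w => Tmap (G w)) D z := by
    rw [hasDerivAt_pi]
    intro j
    have : HasDerivAt (fun w => (bilin (G w) (G w))⁻¹ * G w j)
        (-(2 * S) / q ^ 2 * G z j + q⁻¹ * g j) z := hinv.mul (hcomp j)
    simpa [Tmap, Pi.smul_apply, smul_eq_mul] using this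
  have hderiv : deriv (fun w => Tmap (G w)) z = D := hT.deriv
  rw [hderiv]
  have expand : ∀ j, D j * D j =
      (-(2 * S) / q ^ 2) * (-(2 * S) / q ^ 2) * (G z j * G z j)
      + (2 * (-(2 * S) / q ^ 2) * q⁻¹) * (G z j * g j)
      + q⁻¹ * q⁻¹ * (g j * g j) := fun j => by
    simp only [hD]; ring
  have hsum : bilin D D =
      (-(2 * S) / q ^ 2) * (-(2 * S) / q ^ 2) * q
      + (2 * (-(2 * S) / q ^ 2) * q⁻¹) * S
      + q⁻¹ * q⁻¹ * bilin g g := by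
    simp only [bilin, expand, Finset.sum_add_distrib, ← Finset.mul_sum, hq, hS]
  rw [hsum, hiso z hz]
  field_simp
  ring
end

section
/- Let U ⊆ ℂ be open and let G : U → ℂ⁴ be holomorphic with componentwise real and imaginary parts g, h : U → ℝ⁴. Assume ⟨⟨G(z),G(z)⟩⟩ ≠ 0, ⟨⟨G'(z),G'(z)⟩⟩ = 0 and G'(z) ≠ 0 for all z ∈ U, so that g is a conformal (minimal) immersion with conjugate minimal immersion h. Write T∘G = g̃ + i·h̃ with g̃, h̃ : U → ℝ⁴. Then for all z ∈ U and v ∈ ℂ one has Dh̃(z)(v) = −Dg̃(z)(i·v) (h̃ is a conjugate of g̃), and ⟨Dg̃(z)(1), Dg̃(z)(i)⟩ = 0 and ‖Dg̃(z)(1)‖ = ‖Dg̃(z)(i)‖ (g̃ is conformal). -/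
open scoped BigOperators RealInnerProductSpace

/-- Componentwise real part of a map into `ℂ^m`, viewed in Euclidean space `ℝ^m`. -/
noncomputable def rePart {m : ℕ} (F : ℂ → Fin m → ℂ) (z : ℂ) :
    EuclideanSpace ℝ (Fin m) := WithLp.toLp 2 (fun j => (F z j).re)

/-- Componentwise imaginary part of a map into `ℂ^m`, viewed in Euclidean space `ℝ^m`. -/
noncomputable def imPart {m : ℕ} (F : ℂ → Fin m → ℂ) (z : ℂ) :
    EuclideanSpace ℝ (Fin m) := WithLp.toLp 2 (fun j => (F z j).im)

/-- componentwise real part as a continuous ℝ-linear map into Euclidean space -/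
noncomputable def phiRe : (Fin 4 → ℂ) →L[ℝ] EuclideanSpace ℝ (Fin 4) :=
  ((PiLp.continuousLinearEquiv 2 ℝ (fun _ : Fin 4 => ℝ)).symm.toContinuousLinearMap).comp
    (ContinuousLinearMap.pi fun j => Complex.reCLM.comp (ContinuousLinearMap.proj j))

noncomputable def phiIm : (Fin 4 → ℂ) →L[ℝ] EuclideanSpace ℝ (Fin 4) :=
  ((PiLp.continuousLinearEquiv 2 ℝ (fun _ : Fin 4 => ℝ)).symm.toContinuousLinearMap).comp
    (ContinuousLinearMap.pi fun j => Complex.imCLM.comp (ContinuousLinearMap.proj j))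

/-- If `G = g + ih : U → ℂ⁴` is holomorphic with `⟨⟨G,G⟩⟩ ≠ 0`, `⟨⟨G',G'⟩⟩ = 0` and
`G' ≠ 0` on `U` (so `g` is a conformal minimal immersion with conjugate `h`), and
`T∘G = g̃ + i·h̃`, then `h̃` is a conjugate of `g̃` (`Dh̃(z)(v) = −Dg̃(z)(i·v)`) and `g̃`
is conformal (`⟨Dg̃(z)(1),Dg̃(z)(i)⟩ = 0` and `‖Dg̃(z)(1)‖ = ‖Dg̃(z)(i)‖`). -/
theorem Tmap_comp_conjugate_pair (U : Set ℂ) (hU : IsOpen U)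
    (G : ℂ → Fin 4 → ℂ)
    (hG : ∀ z ∈ U, DifferentiableAt ℂ G z)
    (hne : ∀ z ∈ U, bilin (G z) (G z) ≠ 0)
    (hiso : ∀ z ∈ U, bilin (deriv G z) (deriv G z) = 0)
    (himm : ∀ z ∈ U, deriv G z ≠ 0) :
    ∀ z ∈ U,
      (∀ v : ℂ,
        fderiv ℝ (imPart fun w => Tmap (G w)) z v =
          - fderiv ℝ (rePart fun w => Tmap (G w)) z (Complex.I * v)) ∧
      (⟪fderiv ℝ (rePart fun w => Tmap (G w)) z 1,
          fderiv ℝ (rePart fun w => Tmap (G w)) z Complex.I⟫ : ℝ) = 0 ∧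
      ‖fderiv ℝ (rePart fun w => Tmap (G w)) z 1‖ =
        ‖fderiv ℝ (rePart fun w => Tmap (G w)) z Complex.I‖ := by
  intro z hz
  have hGz : HasDerivAt G (deriv G z) z := (hG z hz).hasDerivAt
  set g' : Fin 4 → ℂ := deriv G z with hg'
  set q : ℂ := bilin (G z) (G z) with hqdef
  have hq : q ≠ 0 := hne z hz
  have hj : ∀ j, HasDerivAt (fun w => G w j) (g' j) z := fun j => hasDerivAt_pi.mp hGz j
  set q' : ℂ := ∑ j, (g' j * G z j + G z j * g' j) with hq'def
  have hQ : HasDerivAt (fun w => bilin (G w) (G w)) q' z := by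
    simp only [bilin]
    exact HasDerivAt.fun_sum fun j _ => (hj j).mul (hj j)
  have hInv : HasDerivAt (fun w => (bilin (G w) (G w))⁻¹) (-q' / q ^ 2) z := hQ.inv hq
  set c : Fin 4 → ℂ := fun j => (-q' / q ^ 2) * G z j + q⁻¹ * g' j with hcdef
  have hF : HasDerivAt (fun w => Tmap (G w)) c z := by
    rw [hasDerivAt_pi]
    intro j
    exact (hInv.mul (hj j))
  -- q' = 2 * bilin (G z) g'
  have hq'2 : q' = 2 * bilin (G z) g' := by
    simp only [hq'def, bilin, Finset.mul_sum]
    exact Finset.sum_congr rfl fun j _ => by ring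
  -- bilin c c = 0
  have hbc : bilin c c = 0 := by
    have hexp : bilin c c = (-q' / q ^ 2) ^ 2 * bilin (G z) (G z)
        + 2 * (-q' / q ^ 2) * q⁻¹ * bilin (G z) g' + q⁻¹ ^ 2 * bilin g' g' := by
      simp only [bilin, hcdef, Finset.mul_sum, ← Finset.sum_add_distrib]
      exact Finset.sum_congr rfl fun j _ => by ring
    rw [hexp, hiso z hz, ← hqdef, hq'2]
    field_simp
    ring
  -- real differentiability and fderiv formulas
  have hFR : HasFDerivAt (fun w => Tmap (G w))
      (((1 : ℂ →L[ℂ] ℂ).smulRight c).restrictScalars ℝ) z :=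
    hF.hasFDerivAt.restrictScalars ℝ
  have hre : HasFDerivAt (rePart fun w => Tmap (G w))
      (phiRe.comp (((1 : ℂ →L[ℂ] ℂ).smulRight c).restrictScalars ℝ)) z :=
    phiRe.hasFDerivAt.comp z hFR
  have him : HasFDerivAt (imPart fun w => Tmap (G w))
      (phiIm.comp (((1 : ℂ →L[ℂ] ℂ).smulRight c).restrictScalars ℝ)) z :=
    phiIm.hasFDerivAt.comp z hFR
  have hreA : ∀ v : ℂ, fderiv ℝ (rePart fun w => Tmap (G w)) z v
      = (WithLp.toLp 2 (fun j => (v * c j).re) : EuclideanSpace ℝ (Fin 4)) := by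
    intro v; rw [hre.fderiv]; rfl
  have himA : ∀ v : ℂ, fderiv ℝ (imPart fun w => Tmap (G w)) z v
      = (WithLp.toLp 2 (fun j => (v * c j).im) : EuclideanSpace ℝ (Fin 4)) := by
    intro v; rw [him.fderiv]; rfl
  -- sums from hbc
  have hre0 : ∑ j, ((c j).re ^ 2 - (c j).im ^ 2) = 0 := by
    have := congrArg Complex.re hbc
    simp only [bilin, Complex.re_sum, Complex.mul_re, Complex.zero_re] at this
    rw [← this]
    exact Finset.sum_congr rfl fun j _ => by ring
  have him0 : ∑ j, (c j).re * (c j).im = 0 := by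
    have := congrArg Complex.im hbc
    simp only [bilin, Complex.im_sum, Complex.mul_im, Complex.zero_im] at this
    have h2 : (2 : ℝ) * ∑ j, (c j).re * (c j).im = 0 := by
      rw [Finset.mul_sum, ← this]
      exact Finset.sum_congr rfl fun j _ => by ring
    linarith [h2]
  refine ⟨fun v => ?_, ?_, ?_⟩
  · rw [hreA, himA]
    ext j
    show (v * c j).im = -((Complex.I * v * c j).re)
    simp [Complex.mul_re, Complex.mul_im]
  · rw [hreA, hreA]
    rw [PiLp.inner_apply]
    simp only [PiLp.toLp_apply, RCLike.inner_apply, starRingEnd_apply, star_trivial]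
    have : ∀ j : Fin 4, ((1 : ℂ) * c j).re * ((Complex.I) * c j).re
        = -((c j).re * (c j).im) := by
      intro j; simp [Complex.mul_re]
    rw [Finset.sum_congr rfl fun j _ => mul_comm ((Complex.I * c j).re) (((1:ℂ) * c j).re)]
    rw [Finset.sum_congr rfl fun j _ => this j, Finset.sum_neg_distrib, him0, neg_zero]
  · rw [hreA, hreA, EuclideanSpace.norm_eq, EuclideanSpace.norm_eq]
    congr 1
    simp only [PiLp.toLp_apply]
    have : ∀ j : Fin 4, ‖((1:ℂ) * c j).re‖ ^ 2 - ‖(Complex.I * c j).re‖ ^ 2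
        = (c j).re ^ 2 - (c j).im ^ 2 := by
      intro j
      simp [Real.norm_eq_abs, sq_abs, Complex.mul_re]
    have hsub : ∑ j, (‖((1:ℂ) * c j).re‖ ^ 2 - ‖(Complex.I * c j).re‖ ^ 2) = 0 := by
      rw [Finset.sum_congr rfl fun j _ => this j]; exact hre0
    rw [Finset.sum_sub_distrib] at hsub
    linarith [hsub]
end

section
/- Let U ⊆ ℂ be open and connected and let G : U → ℂ⁴ be holomorphic with componentwise real and imaginary parts g, h : U → ℝ⁴. Assume that ⟨⟨G(z),G(z)⟩⟩ = 0, ⟨⟨G'(z),G'(z)⟩⟩ = 0 and G'(z) ≠ 0 for all z ∈ U. Then there exists an ℝ-linear isometry J : ℝ⁴ → ℝ⁴ with J∘J = −id such that h(z) = J(g(z)) for all z ∈ U and J(Dg(z)(v)) = Dg(z)(−i·v) for all z ∈ U and v ∈ ℂ (i.e. g is a holomorphic curve with respect to the orthogonal complex structure J on ℝ⁴ and h = J∘g). -/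
open scoped BigOperators

open Complex Metric

/-- Identity theorem: differentiable on open preconnected, zero on a ball, zero everywhere. -/
lemma zero_of_ball {U : Set ℂ} (hU : IsOpen U) (hc : IsPreconnected U)
    {f : ℂ → ℂ} (hf : ∀ z ∈ U, DifferentiableAt ℂ f z)
    {z₀ : ℂ} (hz₀ : z₀ ∈ U) {ε : ℝ} (hε : 0 < ε) (hball : ball z₀ ε ⊆ U)
    (h0 : ∀ z ∈ ball z₀ ε, f z = 0) : ∀ z ∈ U, f z = 0 := by
  have hd : DifferentiableOn ℂ f U := fun z hz => (hf z hz).differentiableWithinAt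
  have ha : AnalyticOnNhd ℂ f U := hd.analyticOnNhd hU
  have hev : f =ᶠ[nhds z₀] 0 := by
    filter_upwards [Metric.ball_mem_nhds z₀ hε] with z hz using h0 z hz
  exact fun z hz => ha.eqOn_zero_of_preconnected_of_eventuallyEq_zero hc hz₀ hev hz

/-- Product of two functions vanishing with one not identically zero. -/
lemma zero_of_mul {U : Set ℂ} (hU : IsOpen U) (hc : IsPreconnected U)
    {f g : ℂ → ℂ} (hf : ∀ z ∈ U, DifferentiableAt ℂ f z)
    (hg : ∀ z ∈ U, DifferentiableAt ℂ g z)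
    (hfg : ∀ z ∈ U, f z * g z = 0)
    {z₂ : ℂ} (hz₂ : z₂ ∈ U) (hfz : f z₂ ≠ 0) : ∀ z ∈ U, g z = 0 := by
  have hd : DifferentiableOn ℂ g U := fun z hz => (hg z hz).differentiableWithinAt
  have ha : AnalyticOnNhd ℂ g U := hd.analyticOnNhd hU
  have hev : g =ᶠ[nhds z₂] 0 := by
    have h1 : ∀ᶠ z in nhds z₂, f z ≠ 0 := (hf z₂ hz₂).continuousAt.eventually_ne hfz
    filter_upwards [h1, hU.mem_nhds hz₂] with z h1z h2z
    have := hfg z h2z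
    exact (mul_eq_zero.mp this).resolve_left h1z
  exact fun z hz => ha.eqOn_zero_of_preconnected_of_eventuallyEq_zero hc hz₂ hev hz

/-- Vanishing Wronskian implies pairwise proportionality of values. -/
lemma wronskian_rel {U : Set ℂ} (hU : IsOpen U) (hc : IsPreconnected U)
    {f g : ℂ → ℂ} (hf : ∀ z ∈ U, DifferentiableAt ℂ f z)
    (hg : ∀ z ∈ U, DifferentiableAt ℂ g z)
    (hw : ∀ z ∈ U, f z * deriv g z = g z * deriv f z) :
    ∀ z ∈ U, ∀ w ∈ U, f z * g w = f w * g z := by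
  by_cases hall : ∀ z ∈ U, f z = 0
  · intro z hz w hw'
    rw [hall z hz, hall w hw']; ring
  · push_neg at hall
    obtain ⟨z₁, hz₁, hfz₁⟩ := hall
    -- key step for a point with nonzero value of f
    have key : ∀ w ∈ U, f w ≠ 0 → ∀ z ∈ U, f z * g w = f w * g z := by
      intro w hwU hfw
      have h1 : ∀ᶠ z in nhds w, f z ≠ 0 := (hf w hwU).continuousAt.eventually_ne hfw
      obtain ⟨ε, hε, hb⟩ := Metric.eventually_nhds_iff_ball.mp (h1.and (hU.eventually_mem hwU))
      set η : ℂ → ℂ := fun z => g z * f w - f z * g w with hη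
      have hηdiff : ∀ z ∈ U, DifferentiableAt ℂ η z := fun z hz =>
        ((hg z hz).mul_const _).sub ((hf z hz).mul_const _)
      have hη0 : ∀ z ∈ ball w ε, η z = 0 := by
        set ψ : ℂ → ℂ := fun z => η z / f z with hψ
        have hψd : ∀ z ∈ ball w ε, DifferentiableAt ℂ ψ z := fun z hz =>
          (hηdiff z (hb z hz).2).div (hf z (hb z hz).2) (hb z hz).1
        have hψ' : ∀ z ∈ ball w ε, deriv ψ z = 0 := by
          intro z hz
          have hfz : f z ≠ 0 := (hb z hz).1
          have hzU : z ∈ U := (hb z hz).2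
          have hηz : deriv η z = deriv g z * f w - deriv f z * g w := by
            rw [hη]
            rw [deriv_fun_sub ((hg z hzU).mul_const _) ((hf z hzU).mul_const _),
              deriv_mul_const (hg z hzU), deriv_mul_const (hf z hzU)]
          rw [hψ, deriv_fun_div (hηdiff z hzU) (hf z hzU) hfz, hηz]
          have := hw z hzU
          field_simp
          ring_nf
          linear_combination (f w) * this
        have hconst : ∀ z ∈ ball w ε, ψ z = ψ w := by
          intro z hz
          refine (convex_ball w ε).is_const_of_fderivWithin_eq_zero
            (fun y hy => (hψd y hy).differentiableWithinAt) ?_ hz (Metric.mem_ball_self hε)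
          intro y hy
          rw [fderivWithin_of_isOpen Metric.isOpen_ball hy]
          have hd0 : deriv ψ y = 0 := hψ' y hy
          refine ContinuousLinearMap.ext fun t => ?_
          have h1 : fderiv ℂ ψ y 1 = deriv ψ y := rfl
          have h2 : fderiv ℂ ψ y t = t • fderiv ℂ ψ y 1 := by
            rw [← ContinuousLinearMap.map_smul, smul_eq_mul, mul_one]
          simp [h2, h1, hd0]
        intro z hz
        have h3 : ψ z = 0 := by
          rw [hconst z hz]
          have : η w = 0 := by rw [hη]; ring
          simp [hψ, this]
        have hfz : f z ≠ 0 := (hb z hz).1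
        have := div_eq_zero_iff.mp h3
        exact this.resolve_right hfz
      have hη0U : ∀ z ∈ U, η z = 0 :=
        zero_of_ball hU hc hηdiff hwU hε (fun z hz => (hb z hz).2) hη0
      intro z hz
      have := hη0U z hz
      rw [hη] at this
      linear_combination -this
    intro z hz w hwU
    by_cases hfw : f w = 0
    · have h4 := key z₁ hz₁ hfz₁ w hwU
      have hgw : g w = 0 := by
        have h5 : f w * g z₁ = 0 := by rw [hfw]; ring
        rw [h4] at h5
        rcases mul_eq_zero.mp h5 with h | h
        · exact absurd h hfz₁
        · exact h
      rw [hfw, hgw]; ring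
    · exact key w hwU hfw z hz

/-- Derivatives of functions differentiable on an open set are differentiable. -/
lemma deriv_differentiable {U : Set ℂ} (hU : IsOpen U) {f : ℂ → ℂ}
    (hf : ∀ z ∈ U, DifferentiableAt ℂ f z) :
    ∀ z ∈ U, DifferentiableAt ℂ (deriv f) z := by
  have hd : DifferentiableOn ℂ f U := fun z hz => (hf z hz).differentiableWithinAt
  have ha : AnalyticOnNhd ℂ f U := hd.analyticOnNhd hU
  exact fun z hz => (ha.deriv z hz).differentiableAt

/-- Column lemma: if the determinant vanishes and the Wronskian of the first column
vanishes, and the first column is not identically zero, then both columns are parallel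
to a fixed vector. -/
lemma column_case {U : Set ℂ} (hU : IsOpen U) (hc : IsPreconnected U)
    {w1 w2 w3 w4 : ℂ → ℂ}
    (h1 : ∀ z ∈ U, DifferentiableAt ℂ w1 z) (h2 : ∀ z ∈ U, DifferentiableAt ℂ w2 z)
    (h3 : ∀ z ∈ U, DifferentiableAt ℂ w3 z) (h4 : ∀ z ∈ U, DifferentiableAt ℂ w4 z)
    (hdet : ∀ z ∈ U, w1 z * w2 z = w3 z * w4 z)
    (hα : ∀ z ∈ U, w1 z * deriv w4 z = w4 z * deriv w1 z)
    {z₀ : ℂ} (hz₀ : z₀ ∈ U) (hne : w1 z₀ ≠ 0 ∨ w4 z₀ ≠ 0) :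
    ∃ a₁ a₂ : ℂ, ¬(a₁ = 0 ∧ a₂ = 0) ∧
      ∀ z ∈ U, a₂ * w1 z = a₁ * w4 z ∧ a₂ * w3 z = a₁ * w2 z := by
  refine ⟨w1 z₀, w4 z₀, by tauto, ?_⟩
  have eq1 : ∀ z ∈ U, w4 z₀ * w1 z = w1 z₀ * w4 z := by
    intro z hz
    have := wronskian_rel hU hc h1 h4 hα z hz z₀ hz₀
    linear_combination this
  -- φ := w4 z₀ * w3 - w1 z₀ * w2 vanishes
  set φ : ℂ → ℂ := fun z => w4 z₀ * w3 z - w1 z₀ * w2 z with hφ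
  have hφd : ∀ z ∈ U, DifferentiableAt ℂ φ z := fun z hz =>
    ((h3 z hz).const_mul _).sub ((h2 z hz).const_mul _)
  have hφpt : ∀ z ∈ U, (w1 z ≠ 0 ∨ w4 z ≠ 0) → φ z = 0 := by
    intro z hz hnz
    have e1 := eq1 z hz
    have ed := hdet z hz
    rcases hnz with hn | hn
    · have : w1 z * φ z = 0 := by rw [hφ]; linear_combination (w3 z) * e1 - (w1 z₀) * ed
      exact (mul_eq_zero.mp this).resolve_left hn
    · have : w4 z * φ z = 0 := by rw [hφ]; linear_combination (-(w4 z₀)) * ed + (w2 z) * e1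
      exact (mul_eq_zero.mp this).resolve_left hn
  have hφ0 : ∀ z ∈ U, φ z = 0 := by
    rcases hne with hn | hn
    · have h1' : ∀ᶠ z in nhds z₀, w1 z ≠ 0 := (h1 z₀ hz₀).continuousAt.eventually_ne hn
      obtain ⟨ε, hε, hb⟩ := Metric.eventually_nhds_iff_ball.mp (h1'.and (hU.eventually_mem hz₀))
      exact zero_of_ball hU hc hφd hz₀ hε (fun z hz => (hb z hz).2)
        (fun z hz => hφpt z (hb z hz).2 (Or.inl (hb z hz).1))
    · have h4' : ∀ᶠ z in nhds z₀, w4 z ≠ 0 := (h4 z₀ hz₀).continuousAt.eventually_ne hn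
      obtain ⟨ε, hε, hb⟩ := Metric.eventually_nhds_iff_ball.mp (h4'.and (hU.eventually_mem hz₀))
      exact zero_of_ball hU hc hφd hz₀ hε (fun z hz => (hb z hz).2)
        (fun z hz => hφpt z (hb z hz).2 (Or.inr (hb z hz).1))
  intro z hz
  refine ⟨by linear_combination eq1 z hz, ?_⟩
  have := hφ0 z hz
  rw [hφ] at this
  linear_combination this

/-- The dichotomy: columns parallel to a fixed vector, or rows parallel to a fixed vector. -/
lemma dichotomy {U : Set ℂ} (hU : IsOpen U) (hc : IsPreconnected U)
    {w1 w2 w3 w4 : ℂ → ℂ}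
    (h1 : ∀ z ∈ U, DifferentiableAt ℂ w1 z) (h2 : ∀ z ∈ U, DifferentiableAt ℂ w2 z)
    (h3 : ∀ z ∈ U, DifferentiableAt ℂ w3 z) (h4 : ∀ z ∈ U, DifferentiableAt ℂ w4 z)
    (hdet : ∀ z ∈ U, w1 z * w2 z = w3 z * w4 z)
    (hiso : ∀ z ∈ U, deriv w1 z * deriv w2 z = deriv w3 z * deriv w4 z) :
    (∃ a₁ a₂ : ℂ, ¬(a₁ = 0 ∧ a₂ = 0) ∧
      ∀ z ∈ U, a₂ * w1 z = a₁ * w4 z ∧ a₂ * w3 z = a₁ * w2 z) ∨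
    (∃ b₁ b₂ : ℂ, ¬(b₁ = 0 ∧ b₂ = 0) ∧
      ∀ z ∈ U, b₂ * w1 z = b₁ * w3 z ∧ b₂ * w4 z = b₁ * w2 z) := by
  -- derivative of the determinant relation
  have hD : ∀ z ∈ U, deriv w1 z * w2 z + w1 z * deriv w2 z
      = deriv w3 z * w4 z + w3 z * deriv w4 z := by
    intro z hz
    have hev : (fun y => w1 y * w2 y) =ᶠ[nhds z] (fun y => w3 y * w4 y) := by
      filter_upwards [hU.mem_nhds hz] with y hy using hdet y hy
    have := hev.deriv_eq
    rw [deriv_fun_mul (h1 z hz) (h2 z hz), deriv_fun_mul (h3 z hz) (h4 z hz)] at this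
    linear_combination this
  set α : ℂ → ℂ := fun z => w1 z * deriv w4 z - w4 z * deriv w1 z with hαdef
  set β : ℂ → ℂ := fun z => w1 z * deriv w3 z - w3 z * deriv w1 z with hβdef
  have hprod : ∀ z ∈ U, α z * β z = 0 := by
    intro z hz
    rw [hαdef, hβdef]
    have e1 := hdet z hz
    have e2 := hiso z hz
    have e3 := hD z hz
    linear_combination (-(deriv w1 z)^2) * e1 + (-(w1 z)^2) * e2 + (w1 z * deriv w1 z) * e3
  have hαd : ∀ z ∈ U, DifferentiableAt ℂ α z := fun z hz =>
    ((h1 z hz).mul (deriv_differentiable hU h4 z hz)).sub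
      ((h4 z hz).mul (deriv_differentiable hU h1 z hz))
  have hβd : ∀ z ∈ U, DifferentiableAt ℂ β z := fun z hz =>
    ((h1 z hz).mul (deriv_differentiable hU h3 z hz)).sub
      ((h3 z hz).mul (deriv_differentiable hU h1 z hz))
  by_cases hα0 : ∀ z ∈ U, α z = 0
  · by_cases hc1 : ∀ z ∈ U, w1 z = 0 ∧ w4 z = 0
    · right
      exact ⟨0, 1, by simp, fun z hz => by
        simp [(hc1 z hz).1, (hc1 z hz).2]⟩
    · left
      push_neg at hc1
      obtain ⟨z₀, hz₀, hne⟩ := hc1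
      have hne' : w1 z₀ ≠ 0 ∨ w4 z₀ ≠ 0 := by tauto
      refine column_case hU hc h1 h2 h3 h4 hdet ?_ hz₀ hne'
      intro z hz
      have := hα0 z hz
      rw [hαdef] at this
      linear_combination this
  · push_neg at hα0
    obtain ⟨z₂, hz₂, hαz₂⟩ := hα0
    have hβ0 : ∀ z ∈ U, β z = 0 := zero_of_mul hU hc hαd hβd hprod hz₂ hαz₂
    by_cases hr1 : ∀ z ∈ U, w1 z = 0 ∧ w3 z = 0
    · left
      exact ⟨0, 1, by simp, fun z hz => by
        simp [(hr1 z hz).1, (hr1 z hz).2]⟩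
    · right
      push_neg at hr1
      obtain ⟨z₀, hz₀, hne⟩ := hr1
      have hne' : w1 z₀ ≠ 0 ∨ w3 z₀ ≠ 0 := by tauto
      have hdet' : ∀ z ∈ U, w1 z * w2 z = w4 z * w3 z := by
        intro z hz; rw [hdet z hz]; ring
      refine column_case hU hc h1 h2 h4 h3 hdet' ?_ hz₀ hne'
      intro z hz
      have := hβ0 z hz
      rw [hβdef] at this
      linear_combination this



/-- Key algebraic lemma: a vector in the isotropic plane determined by `(p,q,r,s)` and
sign `σ` has its imaginary part determined linearly by its real part. -/
lemma key_alg (p q r s σ : ℝ) (hσ : σ^2 = 1) (Z : Fin 4 → ℂ)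
    (e1 : ((r:ℂ) + s*I) * (Z 0 + I * Z 1) = ((p:ℂ) + q*I) * (σ*Z 2 + I * Z 3))
    (e2 : ((r:ℂ) + s*I) * (-(σ*Z 2) + I * Z 3) = ((p:ℂ) + q*I) * (Z 0 - I * Z 1)) :
    ((p^2+q^2+r^2+s^2) * (Z 0).im
        = (p^2+q^2-r^2-s^2) * (Z 1).re - σ*(2*p*s-2*q*r)*(Z 2).re
          + (2*p*r+2*q*s)*(Z 3).re) ∧
    ((p^2+q^2+r^2+s^2) * (Z 1).im
        = -((p^2+q^2-r^2-s^2) * (Z 0).re) - σ*(2*p*r+2*q*s)*(Z 2).re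
          - (2*p*s-2*q*r)*(Z 3).re) ∧
    ((p^2+q^2+r^2+s^2) * (Z 2).im
        = σ*(2*p*s-2*q*r)*(Z 0).re + σ*(2*p*r+2*q*s)*(Z 1).re
          - σ*(p^2+q^2-r^2-s^2)*(Z 3).re) ∧
    ((p^2+q^2+r^2+s^2) * (Z 3).im
        = -((2*p*r+2*q*s)*(Z 0).re) + (2*p*s-2*q*r)*(Z 1).re
          + σ*(p^2+q^2-r^2-s^2)*(Z 2).re) := by
  have E0 := congrArg Complex.re e1
  have E1 := congrArg Complex.im e1
  have E2 := congrArg Complex.re e2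
  have E3 := congrArg Complex.im e2
  simp only [Complex.add_re, Complex.add_im, Complex.sub_re, Complex.sub_im,
    Complex.neg_re, Complex.neg_im, Complex.mul_re, Complex.mul_im,
    Complex.I_re, Complex.I_im, Complex.ofReal_re, Complex.ofReal_im] at E0 E1 E2 E3
  refine ⟨?_, ?_, ?_, ?_⟩
  · linear_combination (-s) * E0 + r * E1 + q * E2 + (-p) * E3
  · linear_combination (-r) * E0 + (-s) * E1 + (-p) * E2 + (-q) * E3
  · linear_combination (σ*q) * E0 + (-(σ*p)) * E1 + (σ*s) * E2 + (-(σ*r)) * E3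
      - ((p^2+q^2+r^2+s^2) * (Z 2).im) * hσ
  · linear_combination p * E0 + q * E1 + (-r) * E2 + (-s) * E3

set_option maxHeartbeats 1000000 in
/-- Construction of the orthogonal complex structure from a unit vector `(A,B,C)`
and a sign `ε`. -/
lemma build_J (A B C ε : ℝ) (hn : A^2+B^2+C^2 = 1) (hu : ε^2 = 1) :
    ∃ J : EuclideanSpace ℝ (Fin 4) →ₗᵢ[ℝ] EuclideanSpace ℝ (Fin 4),
      (∀ x, J (J x) = -x) ∧
      (∀ x : EuclideanSpace ℝ (Fin 4),
        (J x) 0 = A * x 1 + ε*B * x 2 + C * x 3 ∧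
        (J x) 1 = -(A * x 0) + ε*C * x 2 - B * x 3 ∧
        (J x) 2 = -(ε*B * x 0) - ε*C * x 1 + ε*A * x 3 ∧
        (J x) 3 = -(C * x 0) + B * x 1 - ε*A * x 2) := by
  set f : EuclideanSpace ℝ (Fin 4) →ₗ[ℝ] EuclideanSpace ℝ (Fin 4) :=
    { toFun := fun x => WithLp.toLp 2 ![A * x 1 + ε*B * x 2 + C * x 3,
        -(A * x 0) + ε*C * x 2 - B * x 3,
        -(ε*B * x 0) - ε*C * x 1 + ε*A * x 3,
        -(C * x 0) + B * x 1 - ε*A * x 2]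
      map_add' := by
        intro x y
        ext j
        fin_cases j <;>
          simp [PiLp.add_apply, Matrix.cons_val_zero, Matrix.cons_val_one] <;> ring
      map_smul' := by
        intro c x
        ext j
        fin_cases j <;>
          simp [PiLp.smul_apply, smul_eq_mul, Matrix.cons_val_zero, Matrix.cons_val_one] <;> ring }
    with hf
  have hcomp : ∀ x : EuclideanSpace ℝ (Fin 4),
      f x 0 = A * x 1 + ε*B * x 2 + C * x 3 ∧
      f x 1 = -(A * x 0) + ε*C * x 2 - B * x 3 ∧
      f x 2 = -(ε*B * x 0) - ε*C * x 1 + ε*A * x 3 ∧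
      f x 3 = -(C * x 0) + B * x 1 - ε*A * x 2 := by
    intro x
    refine ⟨rfl, rfl, rfl, rfl⟩
  have hinner : ∀ x y : EuclideanSpace ℝ (Fin 4),
      inner ℝ (f x) (f y) = (inner ℝ x y : ℝ) := by
    intro x y
    rw [PiLp.inner_apply, PiLp.inner_apply]
    simp only [RCLike.inner_apply, starRingEnd_apply, star_trivial]
    rw [Fin.sum_univ_four, Fin.sum_univ_four]
    obtain ⟨hx0, hx1, hx2, hx3⟩ := hcomp x
    obtain ⟨hy0, hy1, hy2, hy3⟩ := hcomp y
    rw [hx0, hx1, hx2, hx3, hy0, hy1, hy2, hy3]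
    linear_combination (x 0 * y 0 + x 1 * y 1 + x 2 * y 2 + x 3 * y 3) * hn
      + (C*C*(x 2)*(y 2) + C*C*(x 1)*(y 1) + B*C*(x 1)*(y 0) + B*C*(x 0)*(y 1)
        + B*B*(x 2)*(y 2) + B*B*(x 0)*(y 0) - A*C*(x 3)*(y 1) - A*C*(x 1)*(y 3)
        - A*B*(x 3)*(y 0) - A*B*(x 0)*(y 3) + A*A*(x 3)*(y 3) + A*A*(x 2)*(y 2)) * hu
  refine ⟨f.isometryOfInner hinner, ?_, ?_⟩
  · intro x
    have hJ : ∀ y, (f.isometryOfInner hinner) y = f y := fun y => rfl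
    rw [hJ, hJ]
    ext j
    obtain ⟨hx0, hx1, hx2, hx3⟩ := hcomp x
    obtain ⟨hfx0, hfx1, hfx2, hfx3⟩ := hcomp (f x)
    have hneg : ∀ k : Fin 4, (-x : EuclideanSpace ℝ (Fin 4)) k = -(x k) := fun k => rfl
    fin_cases j
    · show f (f x) 0 = (-x) 0
      rw [hfx0, hx1, hx2, hx3, hneg]
      linear_combination (-(x 0)) * hn + (-(B*C*(x 1)) - B*B*(x 0) + A*B*(x 3)) * hu
    · show f (f x) 1 = (-x) 1
      rw [hfx1, hx0, hx2, hx3, hneg]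
      linear_combination (-(x 1)) * hn + (-(C*C*(x 1)) - B*C*(x 0) + A*C*(x 3)) * hu
    · show f (f x) 2 = (-x) 2
      rw [hfx2, hx0, hx1, hx3, hneg]
      linear_combination (-(x 2)) * hn + (-(C*C*(x 2)) - B*B*(x 2) - A*A*(x 2)) * hu
    · show f (f x) 3 = (-x) 3
      rw [hfx3, hx0, hx1, hx2, hneg]
      linear_combination (-(x 3)) * hn + (A*C*(x 1) + A*B*(x 0) - A*A*(x 3)) * hu
  · intro x
    exact hcomp x




/-- Componentwise real part as a continuous `ℝ`-linear map. -/
noncomputable def reCLM4 : (Fin 4 → ℂ) →L[ℝ] EuclideanSpace ℝ (Fin 4) :=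
  LinearMap.toContinuousLinearMap
    { toFun := fun w => (WithLp.toLp 2 (fun j => (w j).re) : EuclideanSpace ℝ (Fin 4))
      map_add' := fun x y => by ext j; exact Complex.add_re _ _
      map_smul' := fun c x => by
        ext j; simp [Complex.smul_re] }

set_option maxHeartbeats 1000000 in
/-- From the fixed isotropic plane relations we construct the orthogonal complex structure
and establish all three conclusions. -/
lemma main_case {U : Set ℂ} (hU : IsOpen U)
    {G : ℂ → Fin 4 → ℂ} (hG : ∀ z ∈ U, DifferentiableAt ℂ G z)
    (σ : ℝ) (hσ : σ^2 = 1) (a₁ a₂ : ℂ) (ha : ¬(a₁ = 0 ∧ a₂ = 0))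
    (heq : ∀ z ∈ U,
      a₂ * (G z 0 + I * G z 1) = a₁ * ((σ:ℂ) * G z 2 + I * G z 3) ∧
      a₂ * (-((σ:ℂ) * G z 2) + I * G z 3) = a₁ * (G z 0 - I * G z 1)) :
    ∃ J : EuclideanSpace ℝ (Fin 4) →ₗᵢ[ℝ] EuclideanSpace ℝ (Fin 4),
      (∀ x, J (J x) = -x) ∧
      (∀ z ∈ U, imPart G z = J (rePart G z)) ∧
      (∀ z ∈ U, ∀ v : ℂ,
        J (fderiv ℝ (rePart G) z v) = fderiv ℝ (rePart G) z (-(Complex.I * v))) := by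
  set p := a₁.re with hp
  set q := a₁.im with hq
  set r := a₂.re with hr
  set s := a₂.im with hs
  have hA1 : (p:ℂ) + q*I = a₁ := Complex.re_add_im a₁
  have hA2 : (r:ℂ) + s*I = a₂ := Complex.re_add_im a₂
  set t := p^2+q^2+r^2+s^2 with htdef
  have ht : t ≠ 0 := by
    intro h0
    rw [htdef] at h0
    have hp2 : p^2 = 0 := le_antisymm (by nlinarith [sq_nonneg q, sq_nonneg r, sq_nonneg s]) (sq_nonneg p)
    have hq2 : q^2 = 0 := le_antisymm (by nlinarith [sq_nonneg p, sq_nonneg r, sq_nonneg s]) (sq_nonneg q)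
    have hr2 : r^2 = 0 := le_antisymm (by nlinarith [sq_nonneg p, sq_nonneg q, sq_nonneg s]) (sq_nonneg r)
    have hs2 : s^2 = 0 := le_antisymm (by nlinarith [sq_nonneg p, sq_nonneg q, sq_nonneg r]) (sq_nonneg s)
    exact ha ⟨Complex.ext (by simpa using sq_eq_zero_iff.mp hp2) (by simpa using sq_eq_zero_iff.mp hq2),
      Complex.ext (by simpa using sq_eq_zero_iff.mp hr2) (by simpa using sq_eq_zero_iff.mp hs2)⟩
  have hn : ((p^2+q^2-r^2-s^2)/t)^2 + ((2*p*s-2*q*r)/t)^2 + ((2*p*r+2*q*s)/t)^2 = 1 := by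
    rw [div_pow, div_pow, div_pow, ← add_div, ← add_div,
      div_eq_one_iff_eq (pow_ne_zero 2 ht)]
    rw [htdef]; ring
  have hu : (-σ)^2 = 1 := by linear_combination hσ
  obtain ⟨J, hJJ, hJc⟩ := build_J ((p^2+q^2-r^2-s^2)/t) ((2*p*s-2*q*r)/t)
    ((2*p*r+2*q*s)/t) (-σ) hn hu
  -- the central pointwise claim
  have hZ : ∀ Z : Fin 4 → ℂ,
      a₂ * (Z 0 + I * Z 1) = a₁ * ((σ:ℂ) * Z 2 + I * Z 3) →
      a₂ * (-((σ:ℂ) * Z 2) + I * Z 3) = a₁ * (Z 0 - I * Z 1) →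
      (WithLp.toLp 2 (fun j => (Z j).im) : EuclideanSpace ℝ (Fin 4)) = J (WithLp.toLp 2 (fun j => (Z j).re)) := by
    intro Z he1 he2
    have he1' : ((r:ℂ) + s*I) * (Z 0 + I * Z 1) = ((p:ℂ) + q*I) * ((σ:ℂ)*Z 2 + I * Z 3) := by
      rw [hA1, hA2]; exact he1
    have he2' : ((r:ℂ) + s*I) * (-((σ:ℂ)*Z 2) + I * Z 3) = ((p:ℂ) + q*I) * (Z 0 - I * Z 1) := by
      rw [hA1, hA2]; exact he2
    obtain ⟨k0, k1, k2, k3⟩ := key_alg p q r s σ hσ Z he1' he2'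
    set x : EuclideanSpace ℝ (Fin 4) := WithLp.toLp 2 (fun j => (Z j).re) with hx
    obtain ⟨hc0, hc1, hc2, hc3⟩ := hJc x
    have hxj : ∀ j, x j = (Z j).re := fun j => rfl
    ext j
    fin_cases j
    · show (Z 0).im = J x 0
      rw [hc0, hxj, hxj, hxj]
      rw [htdef] at ht ⊢
      have h9 : (Z 0).im = ((p^2+q^2-r^2-s^2)*(Z 1).re - σ*(2*p*s-2*q*r)*(Z 2).re + (2*p*r+2*q*s)*(Z 3).re)/(p^2+q^2+r^2+s^2) := by
        rw [eq_div_iff ht]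
        linear_combination k0
      rw [h9]; ring
    · show (Z 1).im = J x 1
      rw [hc1, hxj, hxj, hxj]
      rw [htdef] at ht ⊢
      have h9 : (Z 1).im = (-((p^2+q^2-r^2-s^2)*(Z 0).re) - σ*(2*p*r+2*q*s)*(Z 2).re - (2*p*s-2*q*r)*(Z 3).re)/(p^2+q^2+r^2+s^2) := by
        rw [eq_div_iff ht]
        linear_combination k1
      rw [h9]; ring
    · show (Z 2).im = J x 2
      rw [hc2, hxj, hxj, hxj]
      rw [htdef] at ht ⊢
      have h9 : (Z 2).im = (σ*(2*p*s-2*q*r)*(Z 0).re + σ*(2*p*r+2*q*s)*(Z 1).re - σ*(p^2+q^2-r^2-s^2)*(Z 3).re)/(p^2+q^2+r^2+s^2) := by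
        rw [eq_div_iff ht]
        linear_combination k2
      rw [h9]; ring
    · show (Z 3).im = J x 3
      rw [hc3, hxj, hxj, hxj]
      rw [htdef] at ht ⊢
      have h9 : (Z 3).im = (-((2*p*r+2*q*s)*(Z 0).re) + (2*p*s-2*q*r)*(Z 1).re + σ*(p^2+q^2-r^2-s^2)*(Z 2).re)/(p^2+q^2+r^2+s^2) := by
        rw [eq_div_iff ht]
        linear_combination k3
      rw [h9]; ring
  refine ⟨J, hJJ, ?_, ?_⟩
  · intro z hz
    exact hZ (G z) (heq z hz).1 (heq z hz).2
  · intro z hz v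
    have hGz := hG z hz
    have hder : HasDerivAt G (deriv G z) z := hGz.hasDerivAt
    have hcomp : ∀ j : Fin 4, HasDerivAt (fun w => G w j) (deriv G z j) z := fun j =>
      (ContinuousLinearMap.proj j : (Fin 4 → ℂ) →L[ℂ] ℂ).hasFDerivAt.comp_hasDerivAt z hder
    -- differentiate the plane relations
    have hL1 : HasDerivAt (fun w => a₂ * (G w 0 + I * G w 1))
        (a₂ * (deriv G z 0 + I * deriv G z 1)) z :=
      ((hcomp 0).add ((hcomp 1).const_mul I)).const_mul a₂
    have hR1 : HasDerivAt (fun w => a₁ * ((σ:ℂ) * G w 2 + I * G w 3))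
        (a₁ * ((σ:ℂ) * deriv G z 2 + I * deriv G z 3)) z :=
      (((hcomp 2).const_mul ((σ:ℝ):ℂ)).add ((hcomp 3).const_mul I)).const_mul a₁
    have hL2 : HasDerivAt (fun w => a₂ * (-((σ:ℂ) * G w 2) + I * G w 3))
        (a₂ * (-((σ:ℂ) * deriv G z 2) + I * deriv G z 3)) z :=
      ((((hcomp 2).const_mul ((σ:ℝ):ℂ)).neg.add ((hcomp 3).const_mul I)).const_mul a₂)
    have hR2 : HasDerivAt (fun w => a₁ * (G w 0 - I * G w 1))
        (a₁ * (deriv G z 0 - I * deriv G z 1)) z :=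
      (((hcomp 0).sub ((hcomp 1).const_mul I)).const_mul a₁)
    have he1d : a₂ * (deriv G z 0 + I * deriv G z 1)
        = a₁ * ((σ:ℂ) * deriv G z 2 + I * deriv G z 3) := by
      have hev : (fun w => a₂ * (G w 0 + I * G w 1))
          =ᶠ[nhds z] (fun w => a₁ * ((σ:ℂ) * G w 2 + I * G w 3)) := by
        filter_upwards [hU.mem_nhds hz] with y hy using (heq y hy).1
      have h := hev.deriv_eq
      rw [hL1.deriv, hR1.deriv] at h
      exact h
    have he2d : a₂ * (-((σ:ℂ) * deriv G z 2) + I * deriv G z 3)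
        = a₁ * (deriv G z 0 - I * deriv G z 1) := by
      have hev : (fun w => a₂ * (-((σ:ℂ) * G w 2) + I * G w 3))
          =ᶠ[nhds z] (fun w => a₁ * (G w 0 - I * G w 1)) := by
        filter_upwards [hU.mem_nhds hz] with y hy using (heq y hy).2
      have h := hev.deriv_eq
      rw [hL2.deriv, hR2.deriv] at h
      exact h
    set W : Fin 4 → ℂ := fun j => v * deriv G z j with hWdef
    have hW1 : a₂ * (W 0 + I * W 1) = a₁ * ((σ:ℂ) * W 2 + I * W 3) := by
      simp only [hWdef]; linear_combination v * he1d
    have hW2 : a₂ * (-((σ:ℂ) * W 2) + I * W 3) = a₁ * (W 0 - I * W 1) := by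
      simp only [hWdef]; linear_combination v * he2d
    have hWZ := hZ W hW1 hW2
    -- compute the real Fréchet derivative of rePart G
    have hfd : ∀ u : ℂ, fderiv ℝ (rePart G) z u
        = (WithLp.toLp 2 (fun j => (u * deriv G z j).re) : EuclideanSpace ℝ (Fin 4)) := by
      have hFC : HasFDerivAt G
          (ContinuousLinearMap.smulRight (1 : ℂ →L[ℂ] ℂ) (deriv G z)) z :=
        hder.hasFDerivAt
      have hFR := hFC.restrictScalars ℝ
      have hcompF : HasFDerivAt (rePart G)
          (reCLM4.comp ((ContinuousLinearMap.smulRight (1 : ℂ →L[ℂ] ℂ)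
            (deriv G z)).restrictScalars ℝ)) z :=
        reCLM4.hasFDerivAt.comp z hFR
      intro u
      rw [hcompF.fderiv]
      rfl
    rw [hfd v, hfd (-(Complex.I * v))]
    have him : (WithLp.toLp 2 (fun j => ((-(Complex.I * v)) * deriv G z j).re) : EuclideanSpace ℝ (Fin 4))
        = WithLp.toLp 2 (fun j => (W j).im) := by
      ext j
      show ((-(Complex.I * v)) * deriv G z j).re = (v * deriv G z j).im
      simp [Complex.mul_re, Complex.mul_im]
    rw [him, hWZ]


open scoped BigOperators

/-- If `G = g + ih : U → ℂ⁴` is holomorphic on an open connected `U` with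
`⟨⟨G,G⟩⟩ = 0`, `⟨⟨G',G'⟩⟩ = 0` and `G' ≠ 0` on `U`, then there is an orthogonal complex
structure `J` on `ℝ⁴` (an ℝ-linear isometry with `J∘J = −id`) such that `h = J∘g` and
`J(Dg(z)(v)) = Dg(z)(−i·v)`, i.e. `g` is a holomorphic curve with respect to `J`. -/
theorem holomorphic_representative_in_Q0 (U : Set ℂ) (hU : IsOpen U)
    (hconn : IsConnected U) (G : ℂ → Fin 4 → ℂ)
    (hG : ∀ z ∈ U, DifferentiableAt ℂ G z)
    (hQ0 : ∀ z ∈ U, bilin (G z) (G z) = 0)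
    (hiso : ∀ z ∈ U, bilin (deriv G z) (deriv G z) = 0)
    (himm : ∀ z ∈ U, deriv G z ≠ 0) :
    ∃ J : EuclideanSpace ℝ (Fin 4) →ₗᵢ[ℝ] EuclideanSpace ℝ (Fin 4),
      (∀ x, J (J x) = -x) ∧
      (∀ z ∈ U, imPart G z = J (rePart G z)) ∧
      (∀ z ∈ U, ∀ v : ℂ,
        J (fderiv ℝ (rePart G) z v) = fderiv ℝ (rePart G) z (-(Complex.I * v))) := by
  have hpc : IsPreconnected U := hconn.isPreconnected
  set w1 : ℂ → ℂ := fun z => G z 0 + Complex.I * G z 1 with hw1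
  set w2 : ℂ → ℂ := fun z => G z 0 - Complex.I * G z 1 with hw2
  set w3 : ℂ → ℂ := fun z => G z 2 + Complex.I * G z 3 with hw3
  set w4 : ℂ → ℂ := fun z => -G z 2 + Complex.I * G z 3 with hw4
  have hcomp : ∀ z ∈ U, ∀ j : Fin 4, HasDerivAt (fun w => G w j) (deriv G z j) z :=
    fun z hz j => (ContinuousLinearMap.proj j : (Fin 4 → ℂ) →L[ℂ] ℂ).hasFDerivAt.comp_hasDerivAt
      z (hG z hz).hasDerivAt
  have hd1 : ∀ z ∈ U, HasDerivAt w1 (deriv G z 0 + Complex.I * deriv G z 1) z :=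
    fun z hz => (hcomp z hz 0).add ((hcomp z hz 1).const_mul Complex.I)
  have hd2 : ∀ z ∈ U, HasDerivAt w2 (deriv G z 0 - Complex.I * deriv G z 1) z :=
    fun z hz => (hcomp z hz 0).sub ((hcomp z hz 1).const_mul Complex.I)
  have hd3 : ∀ z ∈ U, HasDerivAt w3 (deriv G z 2 + Complex.I * deriv G z 3) z :=
    fun z hz => (hcomp z hz 2).add ((hcomp z hz 3).const_mul Complex.I)
  have hd4 : ∀ z ∈ U, HasDerivAt w4 (-deriv G z 2 + Complex.I * deriv G z 3) z :=
    fun z hz => (hcomp z hz 2).neg.add ((hcomp z hz 3).const_mul Complex.I)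
  have h1 : ∀ z ∈ U, DifferentiableAt ℂ w1 z := fun z hz => (hd1 z hz).differentiableAt
  have h2 : ∀ z ∈ U, DifferentiableAt ℂ w2 z := fun z hz => (hd2 z hz).differentiableAt
  have h3 : ∀ z ∈ U, DifferentiableAt ℂ w3 z := fun z hz => (hd3 z hz).differentiableAt
  have h4 : ∀ z ∈ U, DifferentiableAt ℂ w4 z := fun z hz => (hd4 z hz).differentiableAt
  have hdet : ∀ z ∈ U, w1 z * w2 z = w3 z * w4 z := by
    intro z hz
    have h := hQ0 z hz
    simp only [bilin, Fin.sum_univ_four] at h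
    simp only [hw1, hw2, hw3, hw4]
    linear_combination h - (G z 1 * G z 1 + G z 3 * G z 3) * Complex.I_sq
  have hiso' : ∀ z ∈ U, deriv w1 z * deriv w2 z = deriv w3 z * deriv w4 z := by
    intro z hz
    rw [(hd1 z hz).deriv, (hd2 z hz).deriv, (hd3 z hz).deriv, (hd4 z hz).deriv]
    have h := hiso z hz
    simp only [bilin, Fin.sum_univ_four] at h
    linear_combination h - (deriv G z 1 * deriv G z 1 + deriv G z 3 * deriv G z 3) * Complex.I_sq
  rcases dichotomy hU hpc h1 h2 h3 h4 hdet hiso' with ⟨a₁, a₂, ha, hcol⟩ | ⟨b₁, b₂, hb, hrow⟩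
  · refine main_case hU hG (-1) (by norm_num) a₁ a₂ ha ?_
    intro z hz
    obtain ⟨hc1, hc2⟩ := hcol z hz
    simp only [hw1, hw2, hw3, hw4] at hc1 hc2
    constructor
    · push_cast
      linear_combination hc1
    · push_cast
      linear_combination hc2
  · refine main_case hU hG 1 (by norm_num) b₁ b₂ hb ?_
    intro z hz
    obtain ⟨hc1, hc2⟩ := hrow z hz
    simp only [hw1, hw2, hw3, hw4] at hc1 hc2
    constructor
    · push_cast
      linear_combination hc1
    · push_cast
      linear_combination hc2
end

section
/- Let U ⊆ ℂ be open and let g, h : U → ℝ^N be smooth maps such that for all z ∈ U and v ∈ ℂ, Dh(z)(v) = −Dg(z)(i·v), and such that g is a conformal immersion: ⟨Dg(z)(1), Dg(z)(i)⟩ = 0 and ‖Dg(z)(1)‖ = ‖Dg(z)(i)‖ ≠ 0 for all z. Then at every point z with h(z) ≠ 0, the function r = ‖h‖ satisfies (∂r/∂x)² + (∂r/∂y)² ≤ ‖Dg(z)(1)‖², where ∂r/∂x = Dr(z)(1) and ∂r/∂y = Dr(z)(i); equivalently, the gradient of r with respect to the metric induced by g has norm at most 1. -/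
open scoped BigOperators RealInnerProductSpace

lemma bessel_two {E : Type*} [NormedAddCommGroup E] [InnerProductSpace ℝ E]
    (u a b : E) (hab : (⟪a, b⟫ : ℝ) = 0) (hn : ‖a‖ = ‖b‖) :
    (⟪u, a⟫ : ℝ)^2 + (⟪u, b⟫ : ℝ)^2 ≤ ‖u‖^2 * ‖a‖^2 := by
  set p : ℝ := ⟪u, a⟫ with hp
  set q : ℝ := ⟪u, b⟫ with hq
  set w : E := p • a + q • b with hw
  have h1 : (⟪u, w⟫ : ℝ) = p^2 + q^2 := by
    rw [hw, inner_add_right, real_inner_smul_right, real_inner_smul_right, ← hp, ← hq]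
    ring
  have h2 : ‖w‖^2 = (p^2 + q^2) * ‖a‖^2 := by
    rw [hw, @norm_add_sq_real, real_inner_smul_left, real_inner_smul_right, hab,
      norm_smul, norm_smul, mul_pow, mul_pow, ← hn]
    simp [Real.norm_eq_abs, sq_abs]
    ring
  have h3 : (⟪u, w⟫ : ℝ) ≤ ‖u‖ * ‖w‖ := real_inner_le_norm u w
  have h4 : (p^2 + q^2)^2 ≤ ‖u‖^2 * ‖w‖^2 := by
    rw [← h1]
    nlinarith [norm_nonneg u, norm_nonneg w, real_inner_le_norm u w]
  rw [h2] at h4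
  rcases eq_or_lt_of_le (by positivity : (0:ℝ) ≤ p^2 + q^2) with hs | hs
  · nlinarith [sq_nonneg (‖u‖ * ‖a‖)]
  · nlinarith

lemma hasFDerivAt_norm_comp {E : Type*} [NormedAddCommGroup E] [InnerProductSpace ℝ E]
    {f : ℂ → E} {f' : ℂ →L[ℝ] E} {z : ℂ} (hf : HasFDerivAt f f' z) (h0 : f z ≠ 0) :
    HasFDerivAt (fun w => ‖f w‖) (‖f z‖⁻¹ • ((innerSL ℝ (f z)).comp f')) z := by
  have h1 : HasFDerivAt (fun w => ‖f w‖ ^ 2) (2 • ((innerSL ℝ (f z)).comp f')) z := hf.norm_sq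
  have h2 : (‖f z‖ ^ 2 : ℝ) ≠ 0 := pow_ne_zero 2 (norm_ne_zero_iff.mpr h0)
  have h3 := (Real.hasDerivAt_sqrt h2).comp_hasFDerivAt z h1
  have heq : (fun w => Real.sqrt (‖f w‖ ^ 2)) = fun w => ‖f w‖ := by
    funext w; exact Real.sqrt_sq (norm_nonneg _)
  rw [show (Real.sqrt ∘ fun w => ‖f w‖ ^ 2) = fun w => ‖f w‖ by
    funext w; exact Real.sqrt_sq (norm_nonneg _)] at h3
  refine h3.congr_fderiv ?_
  ext v
  have : Real.sqrt (‖f z‖ ^ 2) = ‖f z‖ := Real.sqrt_sq (norm_nonneg _)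
  simp only [ContinuousLinearMap.coe_smul', Pi.smul_apply, ContinuousLinearMap.coe_comp',
    Function.comp_apply, innerSL_apply_apply, one_div, this, smul_eq_mul,
    ContinuousLinearMap.smul_apply, nsmul_eq_mul, Nat.cast_ofNat]
  have hz : ‖f z‖ ≠ 0 := norm_ne_zero_iff.mpr h0
  field_simp

/-- Let `g, h : U → ℝ^N` be differentiable with `Dh(z)(v) = −Dg(z)(i·v)` (`h` is a
conjugate minimal surface of `g`) and `g` a conformal immersion. Then at every `z ∈ U`
with `h z ≠ 0`, the function `r = ‖h‖` satisfies
`(∂r/∂x)² + (∂r/∂y)² ≤ ‖Dg(z)(1)‖²`, i.e. the gradient of `r` in the metric induced by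
`g` has norm at most `1`. -/
theorem gradient_norm_le_one (N : ℕ) (U : Set ℂ) (hU : IsOpen U)
    (g h : ℂ → EuclideanSpace ℝ (Fin N))
    (hg : ∀ z ∈ U, DifferentiableAt ℝ g z)
    (hh : ∀ z ∈ U, DifferentiableAt ℝ h z)
    (hconj : ∀ z ∈ U, ∀ v : ℂ, fderiv ℝ h z v = - fderiv ℝ g z (Complex.I * v))
    (hconf : ∀ z ∈ U,
      (⟪fderiv ℝ g z 1, fderiv ℝ g z Complex.I⟫ : ℝ) = 0 ∧
      ‖fderiv ℝ g z 1‖ = ‖fderiv ℝ g z Complex.I‖ ∧ ‖fderiv ℝ g z 1‖ ≠ 0) :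
    ∀ z ∈ U, h z ≠ 0 →
      (fderiv ℝ (fun w => ‖h w‖) z 1)^2 + (fderiv ℝ (fun w => ‖h w‖) z Complex.I)^2 ≤
        ‖fderiv ℝ g z 1‖^2 := by
  intro z hz hz0
  obtain ⟨horth, hnorm, hne⟩ := hconf z hz
  have hD := hasFDerivAt_norm_comp (hh z hz).hasFDerivAt hz0
  have hfd := hD.fderiv
  have hm : ‖h z‖ ≠ 0 := norm_ne_zero_iff.mpr hz0
  have hfd1 : fderiv ℝ (fun w => ‖h w‖) z 1 = ‖h z‖⁻¹ * ⟪h z, fderiv ℝ h z 1⟫ := by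
    rw [hfd]; simp
  have hfdI : fderiv ℝ (fun w => ‖h w‖) z Complex.I
      = ‖h z‖⁻¹ * ⟪h z, fderiv ℝ h z Complex.I⟫ := by
    rw [hfd]; simp
  have h1 : fderiv ℝ h z 1 = - fderiv ℝ g z Complex.I := by
    rw [hconj z hz 1, mul_one]
  have h2 : fderiv ℝ h z Complex.I = fderiv ℝ g z 1 := by
    rw [hconj z hz Complex.I, Complex.I_mul_I, show (-1 : ℂ) = -(1:ℂ) by ring, map_neg, neg_neg]
  rw [hfd1, hfdI, h1, h2]
  set a := fderiv ℝ g z 1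
  set b := fderiv ℝ g z Complex.I
  have hb := bessel_two (h z) a b horth hnorm
  rw [inner_neg_right]
  have hinv : (0:ℝ) < ‖h z‖⁻¹ := by positivity
  have key : (⟪h z, a⟫ : ℝ)^2 + (⟪h z, b⟫ : ℝ)^2 ≤ ‖h z‖^2 * ‖a‖^2 := hb
  have hexp : (‖h z‖⁻¹ * -(⟪h z, b⟫ : ℝ))^2 + (‖h z‖⁻¹ * (⟪h z, a⟫ : ℝ))^2
      = ‖h z‖⁻¹^2 * ((⟪h z, a⟫ : ℝ)^2 + (⟪h z, b⟫ : ℝ)^2) := by ring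
  rw [hexp]
  calc ‖h z‖⁻¹^2 * ((⟪h z, a⟫ : ℝ)^2 + (⟪h z, b⟫ : ℝ)^2)
      ≤ ‖h z‖⁻¹^2 * (‖h z‖^2 * ‖a‖^2) := by
        apply mul_le_mul_of_nonneg_left key (by positivity)
    _ = ‖a‖^2 := by field_simp
end
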